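/- arXiv:2403.13046 — 2 statements merged into one kernel-verified Lean document; each statement's English description precedes it below -/
import Mathlib

section
/- Let H be a Hermitian n×n complex matrix, A an n×n complex matrix, and λ a real number with [H,A] = λ·A. For any vector ψ ∈ ℂⁿ and t ∈ ℝ, let ψ(t) := exp(-(i t)·H) ψ (matrix exponential applied to ψ). Then ⟨ψ(t), A ψ(t)⟩ = exp(i λ t) · ⟨ψ, A ψ⟩, where ⟨·,·⟩ is the standard Hermitian inner product on ℂⁿ. -/
open NormedSpace Matrix

section Aux

variable {n : ℕ}

private lemma exp_semiconj (X Y B : Matrix (Fin n) (Fin n) ℂ) (h : X * B = B * Y) :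
    exp X * B = B * exp Y := by
  letI : SeminormedRing (Matrix (Fin n) (Fin n) ℂ) := Matrix.linftyOpSemiNormedRing
  letI : NormedRing (Matrix (Fin n) (Fin n) ℂ) := Matrix.linftyOpNormedRing
  letI : NormedAlgebra ℂ (Matrix (Fin n) (Fin n) ℂ) := Matrix.linftyOpNormedAlgebra
  have hpow : ∀ k : ℕ, X ^ k * B = B * Y ^ k := by
    intro k
    induction k with
    | zero => simp
    | succ k ih =>
      rw [pow_succ', pow_succ', mul_assoc, ih, ← mul_assoc, h, mul_assoc]
  have hs : Summable fun k : ℕ => (k.factorial : ℂ)⁻¹ • X ^ k := expSeries_summable' X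
  have hs' : Summable fun k : ℕ => (k.factorial : ℂ)⁻¹ • Y ^ k := expSeries_summable' Y
  simp only [exp_eq_tsum (𝕂 := ℂ)]
  rw [← hs.tsum_mul_right, ← hs'.tsum_mul_left]
  congr 1
  funext k
  rw [smul_mul_assoc, mul_smul_comm, hpow]

private lemma exp_scalar (z : ℂ) :
    exp (z • (1 : Matrix (Fin n) (Fin n) ℂ)) = Complex.exp z • 1 := by
  letI : SeminormedRing (Matrix (Fin n) (Fin n) ℂ) := Matrix.linftyOpSemiNormedRing
  letI : NormedRing (Matrix (Fin n) (Fin n) ℂ) := Matrix.linftyOpNormedRing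
  letI : NormedAlgebra ℂ (Matrix (Fin n) (Fin n) ℂ) := Matrix.linftyOpNormedAlgebra
  have := (algebraMap_exp_comm (𝔸 := Matrix (Fin n) (Fin n) ℂ) z).symm
  rw [Algebra.algebraMap_eq_smul_one, Algebra.algebraMap_eq_smul_one] at this
  rw [Complex.exp_eq_exp_ℂ]; exact this

end Aux

/-- The expectation value of a dynamical symmetry oscillates with frequency `λ`
under Schrödinger evolution `ψ(t) = e^{-itH} ψ`:
`⟨ψ(t), A ψ(t)⟩ = e^{iλt} ⟨ψ, A ψ⟩`. -/
theorem expectation_value_oscillates {n : ℕ}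
    (H A : Matrix (Fin n) (Fin n) ℂ) (l : ℝ)
    (hH : Hᴴ = H)
    (hA : H * A - A * H = (l : ℂ) • A)
    (ψ : Fin n → ℂ) (t : ℝ) :
    star (exp ((-(Complex.I * t)) • H) *ᵥ ψ) ⬝ᵥ
        (A *ᵥ (exp ((-(Complex.I * t)) • H) *ᵥ ψ)) =
      Complex.exp (Complex.I * l * t) * (star ψ ⬝ᵥ (A *ᵥ ψ)) := by
  set z : ℂ := Complex.I * t with hz
  -- conjugate transpose of the evolution operator
  have hct : (exp ((-z) • H))ᴴ = exp (z • H) := by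
    rw [← Matrix.exp_conjTranspose, Matrix.conjTranspose_smul, hH]
    congr 1
    simp [hz, Complex.ext_iff]
  -- semiconjugation: (z•H) * A = A * (z•H + (z*l)•1)
  have hsemi : (z • H) * A = A * (z • H + (z * l) • (1 : Matrix (Fin n) (Fin n) ℂ)) := by
    have h1 : H * A = A * H + (l : ℂ) • A := by
      rw [← hA]; noncomm_ring
    rw [smul_mul_assoc, h1, smul_add, smul_smul, mul_add, mul_smul_comm, mul_smul_comm,
      Matrix.mul_one]
  have key : exp (z • H) * A = Complex.exp (z * l) • (A * exp (z • H)) := by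
    rw [exp_semiconj _ _ _ hsemi]
    have hcomm : Commute (z • H) ((z * l) • (1 : Matrix (Fin n) (Fin n) ℂ)) := by
      apply Commute.smul_left
      apply Commute.smul_right
      exact (Commute.one_right H)
    rw [Matrix.exp_add_of_commute _ _ hcomm, exp_scalar]
    rw [mul_smul_comm, mul_smul_comm, Matrix.mul_one]
  have hinv : exp (z • H) * exp ((-z) • H) = 1 := by
    rw [← Matrix.exp_add_of_commute]
    · simp
    · exact ((Commute.refl H).smul_left z).smul_right (-z)
  have hconj : exp (z • H) * A * exp ((-z) • H) = Complex.exp (z * l) • A := by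
    rw [key, smul_mul_assoc, mul_assoc A, hinv, mul_one]
  -- now compute the inner product
  rw [Matrix.star_mulVec, hct, Matrix.mulVec_mulVec, ← Matrix.dotProduct_mulVec,
    Matrix.mulVec_mulVec, ← mul_assoc, hconj, Matrix.smul_mulVec,
    dotProduct_smul, smul_eq_mul]
  congr 1
  rw [hz]; ring
end

section
/- Let H be a Hermitian n×n complex matrix, λ a nonzero real number, and A a nonzero n×n complex matrix with [H,A] = λ·A. Then there exists a vector ψ ∈ ℂⁿ such that the function t ↦ ⟨exp(-(i t)·H) ψ, A (exp(-(i t)·H) ψ)⟩ from ℝ to ℂ is not constant. -/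
open NormedSpace Matrix

private lemma exp_intertwine {n : ℕ} (H A K : Matrix (Fin n) (Fin n) ℂ)
    (h : H * A = A * K) (c : ℂ) :
    exp (c • H) * A = A * exp (c • K) := by
  letI : SeminormedRing (Matrix (Fin n) (Fin n) ℂ) := Matrix.linftyOpSemiNormedRing
  letI : NormedRing (Matrix (Fin n) (Fin n) ℂ) := Matrix.linftyOpNormedRing
  letI : NormedAlgebra ℂ (Matrix (Fin n) (Fin n) ℂ) := Matrix.linftyOpNormedAlgebra
  have key : ∀ m : ℕ, (c • H) ^ m * A = A * (c • K) ^ m := by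
    intro m
    induction m with
    | zero => simp
    | succ m ih =>
      have h1 : (c • H) * A = A * (c • K) := by
        rw [smul_mul_assoc, mul_smul_comm, h]
      rw [pow_succ, pow_succ, mul_assoc, h1, ← mul_assoc, ih, mul_assoc]
  simp only [exp_eq_tsum ℂ]
  have hs1 : Summable (fun m : ℕ => (m.factorial⁻¹ : ℂ) • (c • H) ^ m) :=
    expSeries_summable' (𝕂 := ℂ) (c • H)
  have hs2 : Summable (fun m : ℕ => (m.factorial⁻¹ : ℂ) • (c • K) ^ m) :=
    expSeries_summable' (𝕂 := ℂ) (c • K)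
  rw [← hs1.tsum_mul_right A, ← hs2.tsum_mul_left A]
  congr 1
  funext m
  rw [smul_mul_assoc, mul_smul_comm, key]

private lemma exp_scalar_matrix {n : ℕ} (z : ℂ) :
    exp (z • (1 : Matrix (Fin n) (Fin n) ℂ)) = Complex.exp z • 1 := by
  letI : SeminormedRing (Matrix (Fin n) (Fin n) ℂ) := Matrix.linftyOpSemiNormedRing
  letI : NormedRing (Matrix (Fin n) (Fin n) ℂ) := Matrix.linftyOpNormedRing
  letI : NormedAlgebra ℂ (Matrix (Fin n) (Fin n) ℂ) := Matrix.linftyOpNormedAlgebra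
  have h1 : z • (1 : Matrix (Fin n) (Fin n) ℂ) = algebraMap ℂ _ z :=
    (Algebra.algebraMap_eq_smul_one z).symm
  rw [h1, Complex.exp_eq_exp_ℂ, ← Algebra.algebraMap_eq_smul_one]
  exact (algebraMap_exp_comm z).symm

private lemma conj_exp_eq {n : ℕ} (H A : Matrix (Fin n) (Fin n) ℂ) (l : ℝ)
    (hA : H * A - A * H = (l : ℂ) • A) (c : ℂ) :
    exp (c • H) * (A * exp ((-c) • H)) = Complex.exp (c * l) • A := by
  have hK : H * A = A * (H + (l : ℂ) • 1) := by
    rw [mul_add, mul_smul_comm, mul_one, ← sub_eq_iff_eq_add'] at *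
    exact hA
  have h1 : exp (c • H) * A = A * exp (c • (H + (l : ℂ) • 1)) :=
    exp_intertwine H A _ hK c
  have h2 : c • (H + (l : ℂ) • 1) = c • H + (c * l) • (1 : Matrix (Fin n) (Fin n) ℂ) := by
    rw [smul_add, smul_smul]
  have hcomm : Commute (c • H) ((c * l) • (1 : Matrix (Fin n) (Fin n) ℂ)) :=
    ((Commute.one_right (c • H)).smul_right _)
  have h3 : exp (c • (H + (l : ℂ) • 1)) = exp (c • H) * (Complex.exp (c * l) • 1) := by
    rw [h2, Matrix.exp_add_of_commute _ _ hcomm, exp_scalar_matrix]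
  have h4 : exp (c • H) * exp ((-c) • H) = 1 := by
    have : (-c) • H = -(c • H) := by rw [neg_smul]
    rw [this, ← Matrix.exp_add_of_commute _ _ ((Commute.refl (c • H)).neg_right),
      add_neg_cancel, exp_zero]
  calc exp (c • H) * (A * exp ((-c) • H))
      = (exp (c • H) * A) * exp ((-c) • H) := by rw [mul_assoc]
    _ = (A * (exp (c • H) * (Complex.exp (c * l) • 1))) * exp ((-c) • H) := by
        rw [h1, h3]
    _ = Complex.exp (c * l) • (A * (exp (c • H) * exp ((-c) • H))) := by
        rw [mul_smul_comm, mul_one, mul_smul_comm, smul_mul_assoc, mul_assoc]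
    _ = Complex.exp (c * l) • A := by rw [h4, mul_one]

/-- A nonzero dynamical symmetry produces non-stationary dynamics: some
expectation value `⟨ψ(t), A ψ(t)⟩` with `ψ(t) = e^{-itH} ψ` is not constant
in `t`. -/
theorem dynamical_symmetry_gives_nonstationary_dynamics {n : ℕ}
    (H A : Matrix (Fin n) (Fin n) ℂ) (l : ℝ)
    (hH : Hᴴ = H) (hl : l ≠ 0) (hA0 : A ≠ 0)
    (hA : H * A - A * H = (l : ℂ) • A) :
    ∃ ψ : Fin n → ℂ, ∃ t₁ t₂ : ℝ,
      star (exp ((-(Complex.I * t₁)) • H) *ᵥ ψ) ⬝ᵥ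
          (A *ᵥ (exp ((-(Complex.I * t₁)) • H) *ᵥ ψ)) ≠
        star (exp ((-(Complex.I * t₂)) • H) *ᵥ ψ) ⬝ᵥ
          (A *ᵥ (exp ((-(Complex.I * t₂)) • H) *ᵥ ψ)) := by
  -- find ψ with nonzero expectation value
  obtain ⟨x, hx⟩ : ∃ x : EuclideanSpace ℂ (Fin n),
      inner ℂ (Matrix.toEuclideanLin A x) x ≠ (0 : ℂ) := by
    by_contra hcon
    push_neg at hcon
    exact hA0 (by simpa using (inner_map_self_eq_zero (Matrix.toEuclideanLin A)).mp hcon)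
  set ψ : Fin n → ℂ := WithLp.equiv 2 _ x with hψ
  have hq : star ψ ⬝ᵥ (A *ᵥ ψ) ≠ 0 := by
    intro h0
    apply hx
    have : inner ℂ x (Matrix.toEuclideanLin A x) = (0 : ℂ) := by
      rw [EuclideanSpace.inner_eq_star_dotProduct, dotProduct_comm]
      exact h0
    rw [← inner_conj_symm, this, map_zero]
  set q : ℂ := star ψ ⬝ᵥ (A *ᵥ ψ) with hqdef
  -- general formula for the expectation value
  have key : ∀ t : ℝ,
      star (exp ((-(Complex.I * t)) • H) *ᵥ ψ) ⬝ᵥ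
        (A *ᵥ (exp ((-(Complex.I * t)) • H) *ᵥ ψ)) =
      Complex.exp (Complex.I * t * l) * q := by
    intro t
    set c : ℂ := Complex.I * t with hc
    have hU : (exp ((-c) • H))ᴴ = exp (c • H) := by
      rw [← Matrix.exp_conjTranspose, Matrix.conjTranspose_smul, hH]
      congr 1
      simp [hc, Complex.ext_iff]
    rw [Matrix.star_mulVec, Matrix.mulVec_mulVec, ← Matrix.dotProduct_mulVec,
      Matrix.mulVec_mulVec, hU, ← mul_assoc, mul_assoc, conj_exp_eq H A l hA c,
      Matrix.smul_mulVec, dotProduct_smul, smul_eq_mul]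
  refine ⟨ψ, 0, Real.pi / l, ?_⟩
  rw [key 0, key (Real.pi / l)]
  have h1 : Complex.I * (0 : ℝ) * l = 0 := by simp
  have h2 : Complex.I * ((Real.pi / l : ℝ) : ℂ) * l = Real.pi * Complex.I := by
    have hl' : (l : ℂ) ≠ 0 := Complex.ofReal_ne_zero.mpr hl
    push_cast
    field_simp
  rw [h1, h2, Complex.exp_zero, Complex.exp_pi_mul_I, one_mul, neg_one_mul]
  intro h
  exact hq (by linear_combination h / 2)
end
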